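/- Let k be a field of characteristic 2. Work in the Laurent polynomial ring L = k[X^{±1}, Y^{±1}], and let w = τ((X³ + Y⁵)·X^{−2}Y^{−2}) ∈ W(L) (2-typical Witt vectors). Then there exist u, v ∈ W(L) such that every coefficient of u lies in the subring k[X^{±1}, Y] of L, every coefficient of v lies in the subring k[X, Y^{±1}] of L, and the Witt vector w − V³(τ(X^{−1}Y^{−1})) − u − v has vanishing coefficients in degrees 0, 1, 2, and 3. (This is the computation showing that the pullback of the generating local cohomology class along the α₂-quotient with an E₈^0 singularity, given by x = X², y = Y², z = X³ + Y⁵, satisfies π*(ε,0,0,0) ≡ V³(1/(XY)) in W₄ modulo W₄(B[1/x]) + W₄(B[1/y]).) -/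
import Mathlib

open MvPolynomial

namespace Alpha2E8Aux

open WittVector Finset

noncomputable section

variable {R : Type*} [CommRing R]

/-- ghost component 0 is the 0th coefficient. -/
lemma ghost_zero_eq (x : WittVector 2 R) : ghostComponent 0 x = x.coeff 0 := by
  rw [ghostComponent_apply, wittPolynomial_zero, aeval_X]

lemma ghost_V1 (x : WittVector 2 R) :
    ghostComponent 1 (verschiebung x) = 2 * ghostComponent 0 x := by
  simpa using ghostComponent_verschiebung (p := 2) x 0

lemma ghost_V2 (x : WittVector 2 R) :
    ghostComponent 2 (verschiebung x) = 2 * ghostComponent 1 x := by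
  simpa using ghostComponent_verschiebung (p := 2) x 1

lemma ghost_V3 (x : WittVector 2 R) :
    ghostComponent 3 (verschiebung x) = 2 * ghostComponent 2 x := by
  simpa using ghostComponent_verschiebung (p := 2) x 2

/-- The level-1 "Teichmüller sum defect" Witt vector. -/
def dd1 (c d : R) : WittVector 2 R :=
  teichmuller 2 c + teichmuller 2 d - teichmuller 2 (c + d)
    - verschiebung (teichmuller 2 (-(c * d)))

/-- The level-3 "Teichmüller sum defect" Witt vector. -/
def dd3 (c d : R) : WittVector 2 R :=
  teichmuller 2 c + teichmuller 2 d - teichmuller 2 (c + d)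
    - verschiebung (teichmuller 2 (-(c * d)))
    - verschiebung (verschiebung (teichmuller 2
        (-(c ^ 3 * d + 2 * c ^ 2 * d ^ 2 + c * d ^ 3))))
    - verschiebung (verschiebung (verschiebung (teichmuller 2
        (-(c ^ 7 * d + 4 * c ^ 6 * d ^ 2 + 9 * c ^ 5 * d ^ 3 + 12 * c ^ 4 * d ^ 4 +
            9 * c ^ 3 * d ^ 5 + 4 * c ^ 2 * d ^ 6 + c * d ^ 7)))))

lemma dd1_ghost (c d : R) : ∀ n < 2, ghostComponent n (dd1 c d) = 0 := by
  intro n hn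
  interval_cases n <;>
    · simp only [dd1, map_sub, map_add, ghostComponent_teichmuller,
        ghostComponent_zero_verschiebung, ghost_V1, ghost_V2, ghost_V3]
      norm_num
      try ring

lemma dd3_ghost (c d : R) : ∀ n < 4, ghostComponent n (dd3 c d) = 0 := by
  intro n hn
  interval_cases n <;>
    · simp only [dd3, map_sub, map_add, ghostComponent_teichmuller,
        ghostComponent_zero_verschiebung, ghost_V1, ghost_V2, ghost_V3]
      norm_num
      try ring

/-- ghost components determine coefficients over `ℤ[X,Y]`. -/
lemma coeff_eq_zero_of_ghost (x : WittVector 2 (MvPolynomial (Fin 2) ℤ))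
    (h : ∀ n < 4, ghostComponent n x = 0) : ∀ i < 4, x.coeff i = 0 := by
  have e : ∀ n, ghostComponent n x
      = ∑ i ∈ range (n + 1), (2 : MvPolynomial (Fin 2) ℤ) ^ i * x.coeff i ^ 2 ^ (n - i) := by
    intro n
    rw [ghostComponent_apply, aeval_wittPolynomial]
    norm_num
  have e0 := h 0 (by norm_num); have e1 := h 1 (by norm_num)
  have e2 := h 2 (by norm_num); have e3 := h 3 (by norm_num)
  rw [e] at e0 e1 e2 e3
  simp only [Finset.sum_range_succ, Finset.sum_range_zero] at e0 e1 e2 e3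
  norm_num at e0 e1 e2 e3
  rw [e0] at e1 e2 e3
  norm_num at e1 e2 e3
  rw [e1] at e2 e3
  norm_num at e2 e3
  rw [e2] at e3
  norm_num at e3
  intro i hi
  interval_cases i <;> assumption

lemma coeff_eq_zero_of_ghost2 (x : WittVector 2 (MvPolynomial (Fin 2) ℤ))
    (h : ∀ n < 2, ghostComponent n x = 0) : ∀ i < 2, x.coeff i = 0 := by
  have e : ∀ n, ghostComponent n x
      = ∑ i ∈ range (n + 1), (2 : MvPolynomial (Fin 2) ℤ) ^ i * x.coeff i ^ 2 ^ (n - i) := by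
    intro n
    rw [ghostComponent_apply, aeval_wittPolynomial]
    norm_num
  have e0 := h 0 (by norm_num); have e1 := h 1 (by norm_num)
  rw [e] at e0 e1
  simp only [Finset.sum_range_succ, Finset.sum_range_zero] at e0 e1
  norm_num at e0 e1
  rw [e0] at e1
  norm_num at e1
  intro i hi
  interval_cases i <;> assumption

lemma dd1_coeff_univ :
    ∀ i < 2, (dd1 (X 0 : MvPolynomial (Fin 2) ℤ) (X 1)).coeff i = 0 :=
  coeff_eq_zero_of_ghost2 _ (dd1_ghost _ _)

lemma dd3_coeff_univ :
    ∀ i < 4, (dd3 (X 0 : MvPolynomial (Fin 2) ℤ) (X 1)).coeff i = 0 :=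
  coeff_eq_zero_of_ghost _ (dd3_ghost _ _)


lemma dd3_coeff (c d : R) : ∀ i < 4, (dd3 c d).coeff i = 0 := by
  have hm : WittVector.map ((MvPolynomial.aeval ![c, d]).toRingHom : MvPolynomial (Fin 2) ℤ →+* R)
      (dd3 (X 0) (X 1)) = dd3 c d := by
    simp only [dd3, map_sub, map_add, WittVector.map_teichmuller, WittVector.map_verschiebung,
      map_neg, map_mul, map_pow, map_ofNat, AlgHom.toRingHom_eq_coe, AlgHom.coe_toRingHom,
      aeval_X, Matrix.cons_val_zero, Matrix.cons_val_one, Matrix.head_cons]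
  intro i hi
  rw [← hm, WittVector.map_coeff, dd3_coeff_univ i hi, map_zero]

lemma dd1_coeff (c d : R) : ∀ i < 2, (dd1 c d).coeff i = 0 := by
  have hm : WittVector.map ((MvPolynomial.aeval ![c, d]).toRingHom : MvPolynomial (Fin 2) ℤ →+* R)
      (dd1 (X 0) (X 1)) = dd1 c d := by
    simp only [dd1, map_sub, map_add, WittVector.map_teichmuller, WittVector.map_verschiebung,
      map_neg, map_mul, map_pow, map_ofNat, AlgHom.toRingHom_eq_coe, AlgHom.coe_toRingHom,
      aeval_X, Matrix.cons_val_zero, Matrix.cons_val_one, Matrix.head_cons]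
  intro i hi
  rw [← hm, WittVector.map_coeff, dd1_coeff_univ i hi, map_zero]

lemma Vc1 (x : WittVector 2 R) : (verschiebung x).coeff 1 = x.coeff 0 :=
  verschiebung_coeff_add_one x 0

lemma Vc2 (x : WittVector 2 R) : (verschiebung x).coeff 2 = x.coeff 1 :=
  verschiebung_coeff_add_one x 1

lemma Vc3 (x : WittVector 2 R) : (verschiebung x).coeff 3 = x.coeff 2 :=
  verschiebung_coeff_add_one x 2

lemma coeff_V3_lt4 (x : WittVector 2 R) (h0 : x.coeff 0 = 0) :
    ∀ i < 4, (verschiebung (verschiebung (verschiebung x))).coeff i = 0 := by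
  intro i hi
  interval_cases i <;>
    simp [Vc1, Vc2, Vc3, verschiebung_coeff_zero, h0]

lemma coeff_V2_lt4 (x : WittVector 2 R) (h : ∀ i < 2, x.coeff i = 0) :
    ∀ i < 4, (verschiebung (verschiebung x)).coeff i = 0 := by
  intro i hi
  interval_cases i <;>
    simp [Vc1, Vc2, Vc3, verschiebung_coeff_zero, h 0 (by norm_num), h 1 (by norm_num)]

lemma tau4_coeff0 (c1 c2 c3 c4 : R) :
    ((teichmuller 2 (c1 + c2 + c3 + c4) - teichmuller 2 c1 - teichmuller 2 c2
      - teichmuller 2 c3 - teichmuller 2 c4 : WittVector 2 R)).coeff 0 = 0 := by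
  have h : ∀ a b : WittVector 2 R, (a - b).coeff 0 = a.coeff 0 - b.coeff 0 := by
    intro a b
    exact map_sub (constantCoeff (p := 2)) a b
  simp only [h, teichmuller_coeff_zero]
  ring

lemma tau2_coeff0 (c : R) (hc : c + c = 0) :
    ((teichmuller 2 c + teichmuller 2 c : WittVector 2 R)).coeff 0 = 0 := by
  rw [add_coeff_zero, teichmuller_coeff_zero, hc]

end

end Alpha2E8Aux

set_option maxHeartbeats 2000000 in
theorem alpha2_quotient_E8_pullback (k : Type) [Field k] [CharP k 2]
    (ι : MvPolynomial (Fin 2) k →+*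
      Localization.Away ((X 0 : MvPolynomial (Fin 2) k) * X 1))
    (hι : ι = algebraMap _ _)
    (uX uY : (Localization.Away ((X 0 : MvPolynomial (Fin 2) k) * X 1))ˣ)
    (huX : (uX : Localization.Away ((X 0 : MvPolynomial (Fin 2) k) * X 1)) = ι (X 0))
    (huY : (uY : Localization.Away ((X 0 : MvPolynomial (Fin 2) k) * X 1)) = ι (X 1))
    (w : WittVector 2 (Localization.Away ((X 0 : MvPolynomial (Fin 2) k) * X 1)))
    (hw : w = WittVector.teichmuller 2
      (ι (X 0 ^ 3 + X 1 ^ 5) *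
        (↑uX⁻¹ : Localization.Away ((X 0 : MvPolynomial (Fin 2) k) * X 1)) ^ 2 *
        (↑uY⁻¹ : Localization.Away ((X 0 : MvPolynomial (Fin 2) k) * X 1)) ^ 2)) :
    ∃ u v : WittVector 2 (Localization.Away ((X 0 : MvPolynomial (Fin 2) k) * X 1)),
      (∀ i : ℕ, ∃ (s : MvPolynomial (Fin 2) k) (t : ℕ),
        u.coeff i * ι (X 0) ^ t = ι s) ∧
      (∀ i : ℕ, ∃ (s : MvPolynomial (Fin 2) k) (t : ℕ),
        v.coeff i * ι (X 1) ^ t = ι s) ∧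
      ∀ i < 4, (w - (⇑WittVector.verschiebung)^[3]
        (WittVector.teichmuller 2
          ((↑uX⁻¹ * ↑uY⁻¹ :
            Localization.Away ((X 0 : MvPolynomial (Fin 2) k) * X 1)))) - u - v).coeff i
        = 0 := by
  classical
  set x0 := ι (X 0) with hx0
  set y0 := ι (X 1) with hy0
  set ix := ((↑uX⁻¹ : Localization.Away ((X 0 : MvPolynomial (Fin 2) k) * X 1))) with hix
  set iy := ((↑uY⁻¹ : Localization.Away ((X 0 : MvPolynomial (Fin 2) k) * X 1))) with hiy
  have hX : x0 * ix = 1 := by rw [hix, ← huX]; exact uX.mul_inv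
  have hY : y0 * iy = 1 := by rw [hiy, ← huY]; exact uY.mul_inv
  have h2 : (2 : Localization.Away ((X 0 : MvPolynomial (Fin 2) k) * X 1)) = 0 := by
    have hk : (2 : MvPolynomial (Fin 2) k) = 0 := CharTwo.two_eq_zero
    calc (2 : Localization.Away ((X 0 : MvPolynomial (Fin 2) k) * X 1))
        = ι (2 : MvPolynomial (Fin 2) k) := (map_ofNat ι 2).symm
      _ = 0 := by rw [hk, map_zero]
  -- the two localization side rings
  have hXunit : IsUnit (ι (X 0 : MvPolynomial (Fin 2) k)) := ⟨uX, huX⟩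
  have hYunit : IsUnit (ι (X 1 : MvPolynomial (Fin 2) k)) := ⟨uY, huY⟩
  obtain ⟨gA, hgAdef⟩ : ∃ g, g = IsLocalization.Away.lift
      (S := Localization.Away (X 0 : MvPolynomial (Fin 2) k))
      (X 0 : MvPolynomial (Fin 2) k) hXunit := ⟨_, rfl⟩
  obtain ⟨gB, hgBdef⟩ : ∃ g, g = IsLocalization.Away.lift
      (S := Localization.Away (X 1 : MvPolynomial (Fin 2) k))
      (X 1 : MvPolynomial (Fin 2) k) hYunit := ⟨_, rfl⟩
  have hgA : ∀ r : MvPolynomial (Fin 2) k, gA (algebraMap _ _ r) = ι r := fun r => by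
    rw [hgAdef]; exact IsLocalization.Away.lift_eq (X 0 : MvPolynomial (Fin 2) k) hXunit r
  have hgB : ∀ r : MvPolynomial (Fin 2) k, gB (algebraMap _ _ r) = ι r := fun r => by
    rw [hgBdef]; exact IsLocalization.Away.lift_eq (X 1 : MvPolynomial (Fin 2) k) hYunit r
  obtain ⟨eA, heAdef⟩ : ∃ e, e = IsLocalization.Away.invSelf
      (S := Localization.Away (X 0 : MvPolynomial (Fin 2) k))
      (X 0 : MvPolynomial (Fin 2) k) := ⟨_, rfl⟩
  obtain ⟨eB, heBdef⟩ : ∃ e, e = IsLocalization.Away.invSelf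
      (S := Localization.Away (X 1 : MvPolynomial (Fin 2) k))
      (X 1 : MvPolynomial (Fin 2) k) := ⟨_, rfl⟩
  have heA : gA eA = ix := by
    have h1 : x0 * gA eA = 1 := by
      have h0 := IsLocalization.Away.mul_invSelf
        (S := Localization.Away (X 0 : MvPolynomial (Fin 2) k)) (X 0 : MvPolynomial (Fin 2) k)
      have h2' := congrArg gA h0
      rw [map_mul, map_one, hgA] at h2'
      rw [hx0, heAdef]
      exact h2'
    calc gA eA = gA eA * (x0 * ix) := by rw [hX, mul_one]
      _ = x0 * gA eA * ix := by ring
      _ = ix := by rw [h1, one_mul]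
  have heB : gB eB = iy := by
    have h1 : y0 * gB eB = 1 := by
      have h0 := IsLocalization.Away.mul_invSelf
        (S := Localization.Away (X 1 : MvPolynomial (Fin 2) k)) (X 1 : MvPolynomial (Fin 2) k)
      have h2' := congrArg gB h0
      rw [map_mul, map_one, hgB] at h2'
      rw [hy0, heBdef]
      exact h2'
    calc gB eB = gB eB * (y0 * iy) := by rw [hY, mul_one]
      _ = y0 * gB eB * iy := by ring
      _ = iy := by rw [h1, one_mul]
  -- the Witt vectors upstairs
  set UA : WittVector 2 (Localization.Away (X 0 : MvPolynomial (Fin 2) k)) :=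
    WittVector.teichmuller 2 (algebraMap (MvPolynomial (Fin 2) k) (Localization.Away (X 0 : MvPolynomial (Fin 2) k)) (X 1 ^ 3) * eA ^ 2)
      - WittVector.verschiebung (WittVector.teichmuller 2 (algebraMap (MvPolynomial (Fin 2) k) (Localization.Away (X 0 : MvPolynomial (Fin 2) k)) (X 1) * eA))
      - WittVector.verschiebung (WittVector.verschiebung
          (WittVector.teichmuller 2 (algebraMap (MvPolynomial (Fin 2) k) (Localization.Away (X 0 : MvPolynomial (Fin 2) k)) (X 1 ^ 7) * eA ^ 5)))
      + WittVector.verschiebung (WittVector.verschiebung (WittVector.verschiebung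
          (WittVector.teichmuller 2 (algebraMap (MvPolynomial (Fin 2) k) (Localization.Away (X 0 : MvPolynomial (Fin 2) k)) (X 1 ^ 4) * eA ^ 4))))
      - WittVector.verschiebung (WittVector.verschiebung (WittVector.verschiebung
          (WittVector.teichmuller 2 (algebraMap (MvPolynomial (Fin 2) k) (Localization.Away (X 0 : MvPolynomial (Fin 2) k)) (X 1 ^ 19) * eA ^ 13))))
      - WittVector.verschiebung (WittVector.verschiebung (WittVector.verschiebung
          (WittVector.teichmuller 2 (algebraMap (MvPolynomial (Fin 2) k) (Localization.Away (X 0 : MvPolynomial (Fin 2) k)) (X 1 ^ 9) * eA ^ 7)))) with hUA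
  clear_value UA
  set VB : WittVector 2 (Localization.Away (X 1 : MvPolynomial (Fin 2) k)) :=
    WittVector.teichmuller 2 (algebraMap (MvPolynomial (Fin 2) k) (Localization.Away (X 1 : MvPolynomial (Fin 2) k)) (X 0) * eB ^ 2)
      - WittVector.verschiebung (WittVector.verschiebung
          (WittVector.teichmuller 2 (algebraMap (MvPolynomial (Fin 2) k) (Localization.Away (X 1 : MvPolynomial (Fin 2) k)) (X 0) * eB ^ 3)))
      - WittVector.verschiebung (WittVector.verschiebung (WittVector.verschiebung
          (WittVector.teichmuller 2 (algebraMap (MvPolynomial (Fin 2) k) (Localization.Away (X 1 : MvPolynomial (Fin 2) k)) (X 0 ^ 5) * eB ^ 11)))) with hVB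
  clear_value VB
  refine ⟨WittVector.map gA UA, WittVector.map gB VB, ?_, ?_, ?_⟩
  · intro i
    obtain ⟨⟨σ, m⟩, hm⟩ := IsLocalization.surj
      (M := Submonoid.powers (X 0 : MvPolynomial (Fin 2) k)) (UA.coeff i)
    obtain ⟨n, hn⟩ := (Submonoid.mem_powers_iff _ _).mp m.2
    refine ⟨σ, n, ?_⟩
    have h' := congrArg gA hm
    rw [map_mul, hgA, hgA, ← hn, map_pow] at h'
    rw [WittVector.map_coeff]
    rw [hx0]
    exact h'
  · intro i
    obtain ⟨⟨σ, m⟩, hm⟩ := IsLocalization.surj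
      (M := Submonoid.powers (X 1 : MvPolynomial (Fin 2) k)) (VB.coeff i)
    obtain ⟨n, hn⟩ := (Submonoid.mem_powers_iff _ _).mp m.2
    refine ⟨σ, n, ?_⟩
    have h' := congrArg gB hm
    rw [map_mul, hgB, hgB, ← hn, map_pow] at h'
    rw [WittVector.map_coeff]
    rw [hy0]
    exact h'
  · -- the truncated computation
    have hu : WittVector.map gA UA
        = WittVector.teichmuller 2 (y0 ^ 3 * ix ^ 2)
          - WittVector.verschiebung (WittVector.teichmuller 2 (y0 * ix))
          - WittVector.verschiebung (WittVector.verschiebung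
              (WittVector.teichmuller 2 (y0 ^ 7 * ix ^ 5)))
          + WittVector.verschiebung (WittVector.verschiebung (WittVector.verschiebung
              (WittVector.teichmuller 2 (y0 ^ 4 * ix ^ 4))))
          - WittVector.verschiebung (WittVector.verschiebung (WittVector.verschiebung
              (WittVector.teichmuller 2 (y0 ^ 19 * ix ^ 13))))
          - WittVector.verschiebung (WittVector.verschiebung (WittVector.verschiebung
              (WittVector.teichmuller 2 (y0 ^ 9 * ix ^ 7)))) := by
      simp only [hUA, map_sub, map_add, WittVector.map_teichmuller, WittVector.map_verschiebung,
        map_mul, map_pow, hgA, heA, ← hy0]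
    have hv : WittVector.map gB VB
        = WittVector.teichmuller 2 (x0 * iy ^ 2)
          - WittVector.verschiebung (WittVector.verschiebung
              (WittVector.teichmuller 2 (x0 * iy ^ 3)))
          - WittVector.verschiebung (WittVector.verschiebung (WittVector.verschiebung
              (WittVector.teichmuller 2 (x0 ^ 5 * iy ^ 11)))) := by
      simp only [hVB, map_sub, map_add, WittVector.map_teichmuller, WittVector.map_verschiebung,
        map_mul, map_pow, hgB, heB, ← hx0]
    have ha : ι (X 0 ^ 3 + X 1 ^ 5) * ix ^ 2 * iy ^ 2
        = y0 ^ 3 * ix ^ 2 + x0 * iy ^ 2 := by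
      have he : ι (X 0 ^ 3 + X 1 ^ 5) = x0 ^ 3 + y0 ^ 5 := by
        rw [map_add, map_pow, map_pow, ← hx0, ← hy0]
      rw [he]
      linear_combination ((1)*x0*iy^2 + (1)*x0^2*ix*iy^2) * hX + ((1)*y0^3*ix^2 + (1)*y0^4*ix^2*iy) * hY
    have hT : ∀ x : WittVector 2 (Localization.Away ((X 0 : MvPolynomial (Fin 2) k) * X 1)),
        (∀ i < 4, x.coeff i = 0) → WittVector.truncate (p := 2) 4 x = 0 := by
      intro x h
      exact RingHom.mem_ker.mp ((WittVector.mem_ker_truncate _ _).mpr h)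
    have hE1 := hT _ (Alpha2E8Aux.dd3_coeff (y0 ^ 3 * ix ^ 2) (x0 * iy ^ 2))
    have hE2 := hT _ (Alpha2E8Aux.coeff_V2_lt4 _
      (Alpha2E8Aux.dd1_coeff (y0 ^ 7 * ix ^ 5) (x0 * iy ^ 3)))
    have hE3 := hT _ (Alpha2E8Aux.coeff_V3_lt4 _
      (Alpha2E8Aux.tau4_coeff0 (y0 ^ 19 * ix ^ 13) (y0 ^ 9 * ix ^ 7) (ix * iy) (x0 ^ 5 * iy ^ 11)))
    have hadd : ix * iy + ix * iy = 0 := by linear_combination (ix * iy) * h2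
    have hE4 := hT _ (Alpha2E8Aux.coeff_V3_lt4 _ (Alpha2E8Aux.tau2_coeff0 (ix * iy) hadd))
    -- rewrite the arguments of the Teichmüller lifts in char 2
    have hI1 : -(y0 ^ 3 * ix ^ 2 * (x0 * iy ^ 2)) = y0 * ix := by
      linear_combination ((-1)*y0^3*ix*iy^2) * hX + ((-1)*y0*ix + (-1)*y0^2*ix*iy) * hY + ((-1)*y0*ix) * h2
    have hI2 : -((y0 ^ 3 * ix ^ 2) ^ 3 * (x0 * iy ^ 2)
          + 2 * (y0 ^ 3 * ix ^ 2) ^ 2 * (x0 * iy ^ 2) ^ 2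
          + y0 ^ 3 * ix ^ 2 * (x0 * iy ^ 2) ^ 3)
        = y0 ^ 7 * ix ^ 5 + x0 * iy ^ 3 := by
      linear_combination ((-2)*y0^6*ix^2*iy^4 + (-1)*y0^9*ix^5*iy^2 + (-1)*x0*y0^3*iy^6 + (-2)*x0*y0^6*ix^3*iy^4 + (-1)*x0^2*y0^3*ix*iy^6) * hX + ((-2)*y0^2*ix^2 + (-2)*y0^3*ix^2*iy + (-2)*y0^4*ix^2*iy^2 + (-2)*y0^5*ix^2*iy^3 + (-1)*y0^7*ix^5 + (-1)*y0^8*ix^5*iy + (-1)*x0*iy^3 + (-1)*x0*y0*iy^4 + (-1)*x0*y0^2*iy^5) * hY + ((-1)*y0^2*ix^2 + (-1)*y0^7*ix^5 + (-1)*x0*iy^3) * h2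
    have hI3 : -((y0 ^ 3 * ix ^ 2) ^ 7 * (x0 * iy ^ 2)
          + 4 * (y0 ^ 3 * ix ^ 2) ^ 6 * (x0 * iy ^ 2) ^ 2
          + 9 * (y0 ^ 3 * ix ^ 2) ^ 5 * (x0 * iy ^ 2) ^ 3
          + 12 * (y0 ^ 3 * ix ^ 2) ^ 4 * (x0 * iy ^ 2) ^ 4
          + 9 * (y0 ^ 3 * ix ^ 2) ^ 3 * (x0 * iy ^ 2) ^ 5
          + 4 * (y0 ^ 3 * ix ^ 2) ^ 2 * (x0 * iy ^ 2) ^ 6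
          + y0 ^ 3 * ix ^ 2 * (x0 * iy ^ 2) ^ 7)
        = y0 ^ 19 * ix ^ 13 + y0 ^ 9 * ix ^ 7 + ix * iy + x0 ^ 5 * iy ^ 11 := by
      linear_combination ((-9)*y0^9*ix*iy^10 + (-12)*y0^12*ix^4*iy^8 + (-9)*y0^15*ix^7*iy^6 + (-4)*y0^18*ix^10*iy^4 + (-1)*y0^21*ix^13*iy^2 + (-9)*x0*y0^9*ix^2*iy^10 + (-12)*x0*y0^12*ix^5*iy^8 + (-9)*x0*y0^15*ix^8*iy^6 + (-4)*x0*y0^18*ix^11*iy^4 + (-4)*x0^2*y0^6*iy^12 + (-9)*x0^2*y0^9*ix^3*iy^10 + (-12)*x0^2*y0^12*ix^6*iy^8 + (-9)*x0^2*y0^15*ix^9*iy^6 + (-4)*x0^3*y0^6*ix*iy^12 + (-9)*x0^3*y0^9*ix^4*iy^10 + (-12)*x0^3*y0^12*ix^7*iy^8 + (-4)*x0^4*y0^6*ix^2*iy^12 + (-9)*x0^4*y0^9*ix^5*iy^10 + (-1)*x0^5*y0^3*iy^14 + (-4)*x0^5*y0^6*ix^3*iy^12 + (-1)*x0^6*y0^3*ix*iy^14)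 * hX + ((-9)*ix*iy + (-9)*y0*ix*iy^2 + (-9)*y0^2*ix*iy^3 + (-9)*y0^3*ix*iy^4 + (-9)*y0^4*ix*iy^5 + (-12)*y0^4*ix^4 + (-9)*y0^5*ix*iy^6 + (-12)*y0^5*ix^4*iy + (-9)*y0^6*ix*iy^7 + (-12)*y0^6*ix^4*iy^2 + (-9)*y0^7*ix*iy^8 + (-12)*y0^7*ix^4*iy^3 + (-9)*y0^8*ix*iy^9 + (-12)*y0^8*ix^4*iy^4 + (-12)*y0^9*ix^4*iy^5 + (-9)*y0^9*ix^7 + (-12)*y0^10*ix^4*iy^6 + (-9)*y0^10*ix^7*iy + (-12)*y0^11*ix^4*iy^7 + (-9)*y0^11*ix^7*iy^2 + (-9)*y0^12*ix^7*iy^3 + (-9)*y0^13*ix^7*iy^4 + (-9)*y0^14*ix^7*iy^5 + (-4)*y0^14*ix^10 + (-4)*y0^15*ix^10*iy + (-4)*y0^16*ix^10*iy^2 + (-4)*y0^17*ix^10*iy^3 + (-1)*y0^19*ix^13 + (-1)*y0^20*ix^13*iy + (-4)*x0^2*iy^6 + (-4)*x0^2*y0*iy^7 + (-4)*x0^2*y0^2*iy^8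 + (-4)*x0^2*y0^3*iy^9 + (-4)*x0^2*y0^4*iy^10 + (-4)*x0^2*y0^5*iy^11 + (-1)*x0^5*iy^11 + (-1)*x0^5*y0*iy^12 + (-1)*x0^5*y0^2*iy^13) * hY + ((-5)*ix*iy + (-6)*y0^4*ix^4 + (-5)*y0^9*ix^7 + (-2)*y0^14*ix^10 + (-1)*y0^19*ix^13 + (-1)*x0^5*iy^11 + (-2)*x0^2*iy^6) * h2
    have hI4 : -(y0 ^ 7 * ix ^ 5 * (x0 * iy ^ 3)) = y0 ^ 4 * ix ^ 4 := by
      linear_combination ((-1)*y0^7*ix^4*iy^3) * hX + ((-1)*y0^4*ix^4 + (-1)*y0^5*ix^4*iy + (-1)*y0^6*ix^4*iy^2) * hY + ((-1)*y0^4*ix^4) * h2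
    simp only [Alpha2E8Aux.dd3, Alpha2E8Aux.dd1] at hE1 hE2
    rw [hI1, hI2, hI3] at hE1
    rw [hI4] at hE2
    intro i hi
    have hiter : (⇑(WittVector.verschiebung (p := 2)
          (R := Localization.Away ((X 0 : MvPolynomial (Fin 2) k) * X 1))))^[3]
        (WittVector.teichmuller 2 (ix * iy))
        = WittVector.verschiebung (WittVector.verschiebung (WittVector.verschiebung
            (WittVector.teichmuller 2 (ix * iy)))) := rfl
    rw [hw, hiter, ha, hu, hv]
    have hfin : WittVector.truncate (p := 2) 4
        (WittVector.teichmuller 2 (y0 ^ 3 * ix ^ 2 + x0 * iy ^ 2)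
          - WittVector.verschiebung (WittVector.verschiebung (WittVector.verschiebung
              (WittVector.teichmuller 2 (ix * iy))))
          - (WittVector.teichmuller 2 (y0 ^ 3 * ix ^ 2)
            - WittVector.verschiebung (WittVector.teichmuller 2 (y0 * ix))
            - WittVector.verschiebung (WittVector.verschiebung
                (WittVector.teichmuller 2 (y0 ^ 7 * ix ^ 5)))
            + WittVector.verschiebung (WittVector.verschiebung (WittVector.verschiebung
                (WittVector.teichmuller 2 (y0 ^ 4 * ix ^ 4))))
            - WittVector.verschiebung (WittVector.verschiebung (WittVector.verschiebung
                (WittVector.teichmuller 2 (y0 ^ 19 * ix ^ 13))))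
            - WittVector.verschiebung (WittVector.verschiebung (WittVector.verschiebung
                (WittVector.teichmuller 2 (y0 ^ 9 * ix ^ 7)))))
          - (WittVector.teichmuller 2 (x0 * iy ^ 2)
            - WittVector.verschiebung (WittVector.verschiebung
                (WittVector.teichmuller 2 (x0 * iy ^ 3)))
            - WittVector.verschiebung (WittVector.verschiebung (WittVector.verschiebung
                (WittVector.teichmuller 2 (x0 ^ 5 * iy ^ 11)))))) = 0 := by
      simp only [map_sub, map_add] at hE1 hE2 hE3 hE4 ⊢
      linear_combination (-1 : TruncatedWittVector 2 4
        (Localization.Away ((X 0 : MvPolynomial (Fin 2) k) * X 1))) * hE1 + hE2 - hE3 - hE4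
    exact (WittVector.mem_ker_truncate _ _).mp (RingHom.mem_ker.mpr hfin) i hi
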